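/- arXiv:1012.2910 — 9 statements merged into one kernel-verified Lean document; each statement's English description precedes it below -/
import Mathlib

section
/- Let a be an ASHE with direction vector v ∈ ℤ^d and blocking relation R on {1,…,d}. For any subset U of S with envelope [m,M] (i.e. m = inf U and M = sup U componentwise), the union over x ∈ U of the blocked sets B(x) equals B(m) ∪ B(M). -/
/-- In ℤ, a GLB of a nonempty set is attained. -/
lemma int_glb_mem {s : Set ℤ} {b : ℤ} (hs : s.Nonempty) (h : IsGLB s b) : b ∈ s := by
  by_contra hb
  have hlb : (b + 1) ∈ lowerBounds s := by
    intro y hy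
    have hby := h.1 hy
    rcases lt_or_eq_of_le hby with h' | h'
    · omega
    · exact absurd (h' ▸ hy) hb
  have := h.2 hlb
  omega

lemma int_lub_mem {s : Set ℤ} {b : ℤ} (hs : s.Nonempty) (h : IsLUB s b) : b ∈ s := by
  by_contra hb
  have hub : (b - 1) ∈ upperBounds s := by
    intro y hy
    have hby := h.1 hy
    rcases lt_or_eq_of_le hby with h' | h'
    · omega
    · exact absurd (h' ▸ hy) hb
  have := h.2 hub
  omega

/-- For an ASHE with direction `v` and blocking relation `R`, and a nonempty
subset `U` of `S` with envelope `[m,M]`, the union of the blocked sets `B(x)` over `x ∈ U`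
equals `B(m) ∪ B(M)`. -/
theorem stmt2 {d : ℕ} (C v : Fin d → ℤ) (R : Fin d → Fin d → Prop)
    (U : Set (Fin d → ℤ)) (hU : U.Nonempty)
    (hUS : ∀ x ∈ U, ∀ i, 0 ≤ x i ∧ x i ≤ C i)
    (m M : Fin d → ℤ) (hm : IsGLB U m) (hM : IsLUB U M) :
    ∀ i : Fin d,
      (∃ x ∈ U, ∃ j, ¬(0 ≤ x j + v j ∧ x j + v j ≤ C j) ∧ R j i) ↔
      ((∃ j, ¬(0 ≤ m j + v j ∧ m j + v j ≤ C j) ∧ R j i) ∨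
       (∃ j, ¬(0 ≤ M j + v j ∧ M j + v j ≤ C j) ∧ R j i)) := by
  have hmj : ∀ j, IsGLB ((fun x => x j) '' U) (m j) := fun j => (isGLB_pi.mp hm) j
  have hMj : ∀ j, IsLUB ((fun x => x j) '' U) (M j) := fun j => (isLUB_pi.mp hM) j
  intro i
  constructor
  · rintro ⟨x, hx, j, hcrit, hR⟩
    have hmx : m j ≤ x j := (hmj j).1 ⟨x, hx, rfl⟩
    have hxM : x j ≤ M j := (hMj j).1 ⟨x, hx, rfl⟩
    rcases not_and_or.mp hcrit with h | h
    · exact Or.inl ⟨j, by omega, hR⟩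
    · exact Or.inr ⟨j, by omega, hR⟩
  · rintro (⟨j, hcrit, hR⟩ | ⟨j, hcrit, hR⟩)
    · obtain ⟨x, hx, hxe⟩ := int_glb_mem (hU.image _) (hmj j)
      exact ⟨x, hx, j, by rw [show x j = m j from hxe]; exact hcrit, hR⟩
    · obtain ⟨x, hx, hxe⟩ := int_lub_mem (hU.image _) (hMj j)
      exact ⟨x, hx, j, by rw [show x j = M j from hxe]; exact hcrit, hR⟩
end

section
/- Let a be an ASHE with direction vector v and blocking relation R. Let m ≤ M in S and suppose B(m) ∪ B(M) = ∅. Then for every x with m ≤ x ≤ M, the action is x·a = (x + v) ∨ 0 ∧ C (componentwise truncation), and consequently the envelope transition satisfies [m,M] ⊡ a = [m·a, M·a], with ‖M·a − m·a‖₁ ≤ ‖M − m‖₁. -/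
open Classical in
/-- The action of an ASHE with capacities `C`, direction vector `v` and
blocking relation `R`. -/
noncomputable def asheAct {d : ℕ} (C v : Fin d → ℤ) (R : Fin d → Fin d → Prop)
    (x : Fin d → ℤ) : Fin d → ℤ := fun i =>
  if ∃ j, ¬(0 ≤ x j + v j ∧ x j + v j ≤ C j) ∧ R j i then x i
  else max 0 (min (x i + v i) (C i))

/-- if B(m) ∪ B(M) = ∅ then the ASHE acts by truncated translation on [m,M],
the envelope transition is [m·a, M·a], and the ℓ¹ distance does not increase. -/
theorem stmt3 {d : ℕ} (C v : Fin d → ℤ) (R : Fin d → Fin d → Prop)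
    (m M : Fin d → ℤ)
    (hm : ∀ i, 0 ≤ m i ∧ m i ≤ C i) (hM : ∀ i, 0 ≤ M i ∧ M i ≤ C i)
    (hmM : m ≤ M)
    (hB : ∀ i : Fin d,
      (¬ ∃ j, ¬(0 ≤ m j + v j ∧ m j + v j ≤ C j) ∧ R j i) ∧
      (¬ ∃ j, ¬(0 ≤ M j + v j ∧ M j + v j ≤ C j) ∧ R j i)) :
    (∀ x : Fin d → ℤ, m ≤ x → x ≤ M →
      asheAct C v R x = fun i => max 0 (min (x i + v i) (C i))) ∧
    IsLeast {y | ∃ x : Fin d → ℤ, m ≤ x ∧ x ≤ M ∧ y = asheAct C v R x} (asheAct C v R m) ∧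
    IsGreatest {y | ∃ x : Fin d → ℤ, m ≤ x ∧ x ≤ M ∧ y = asheAct C v R x} (asheAct C v R M) ∧
    ∑ i, |asheAct C v R M i - asheAct C v R m i| ≤ ∑ i, |M i - m i| := by
  have key : ∀ x : Fin d → ℤ, m ≤ x → x ≤ M →
      asheAct C v R x = fun i => max 0 (min (x i + v i) (C i)) := by
    intro x hmx hxM
    funext i
    unfold asheAct
    rw [if_neg]
    rintro ⟨j, hj, hR⟩
    push_neg at hj
    rcases lt_or_ge (x j + v j) 0 with h | h
    · refine (hB i).1 ⟨j, ?_, hR⟩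
      push_neg
      intro h0
      have hx : m j ≤ x j := hmx j
      omega
    · have hC := hj h
      refine (hB i).2 ⟨j, ?_, hR⟩
      push_neg
      intro h0
      have hx : x j ≤ M j := hxM j
      omega
  have mono : ∀ x y : Fin d → ℤ, m ≤ x → x ≤ M → m ≤ y → y ≤ M → x ≤ y →
      asheAct C v R x ≤ asheAct C v R y := by
    intro x y hx1 hx2 hy1 hy2 hxy
    rw [key x hx1 hx2, key y hy1 hy2]
    intro i
    have hxy' : x i ≤ y i := hxy i
    show max 0 (min (x i + v i) (C i)) ≤ max 0 (min (y i + v i) (C i))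
    exact max_le_max le_rfl (min_le_min (by omega) le_rfl)
  refine ⟨key, ⟨⟨m, le_rfl, hmM, rfl⟩, ?_⟩, ⟨⟨M, hmM, le_rfl, rfl⟩, ?_⟩, ?_⟩
  · rintro y ⟨x, hx1, hx2, rfl⟩
    exact mono m x le_rfl hmM hx1 hx2 hx1
  · rintro y ⟨x, hx1, hx2, rfl⟩
    exact mono x M hx1 hx2 hmM le_rfl hx2
  · apply Finset.sum_le_sum
    intro i _
    rw [key m le_rfl hmM, key M hmM le_rfl]
    show |max 0 (min (M i + v i) (C i)) - max 0 (min (m i + v i) (C i))| ≤ |M i - m i|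
    have h1 : m i ≤ M i := hmM i
    rcases abs_cases (M i - m i) with ⟨h4, _⟩ | ⟨h4, _⟩ <;> rw [h4] <;>
      rcases abs_cases (max 0 (min (M i + v i) (C i)) - max 0 (min (m i + v i) (C i))) with
        ⟨h5, _⟩ | ⟨h5, _⟩ <;> rw [h5] <;> omega
end

section
/- Let a be an ASHE with direction vector v and blocking relation R = {(i,i) : i ∈ B} for some subset B of {1,…,d}. For m ≤ M in S, writing [m',M'] = [m,M] ⊡ a, one has ‖M' − m'‖₁ ≤ Σ_{i ∉ B} (M_i − m_i) + Σ_{i ∈ B} max(M_i − m_i, |v_i| − 1). -/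
/-- for an ASHE whose blocking relation is the diagonal on a set B of
auto-blocking components, the width of the envelope transition is bounded by
∑_{i∉B} (M_i - m_i) + ∑_{i∈B} max(M_i - m_i, |v_i| - 1). -/
theorem stmt5 {d : ℕ} (C v : Fin d → ℤ) (B : Finset (Fin d))
    (R : Fin d → Fin d → Prop) (hR : ∀ j i, R j i ↔ (j = i ∧ i ∈ B))
    (m M : Fin d → ℤ)
    (hm : ∀ i, 0 ≤ m i ∧ m i ≤ C i) (hM : ∀ i, 0 ≤ M i ∧ M i ≤ C i)
    (hmM : m ≤ M)
    (m' M' : Fin d → ℤ)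
    (hm' : IsGLB {y | ∃ x : Fin d → ℤ, m ≤ x ∧ x ≤ M ∧ y = asheAct C v R x} m')
    (hM' : IsLUB {y | ∃ x : Fin d → ℤ, m ≤ x ∧ x ≤ M ∧ y = asheAct C v R x} M') :
    ∑ i, |M' i - m' i| ≤
      ∑ i ∈ Finset.univ \ B, (M i - m i) + ∑ i ∈ B, max (M i - m i) (|v i| - 1) := by
  classical
  have hact : ∀ x : Fin d → ℤ, ∀ i, asheAct C v R x i =
      if i ∈ B ∧ ¬(0 ≤ x i + v i ∧ x i + v i ≤ C i) then x i
      else max 0 (min (x i + v i) (C i)) := by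
    intro x i
    have hiff : (∃ j, ¬(0 ≤ x j + v j ∧ x j + v j ≤ C j) ∧ R j i) ↔
        (i ∈ B ∧ ¬(0 ≤ x i + v i ∧ x i + v i ≤ C i)) := by
      constructor
      · rintro ⟨j, hj, hji⟩
        rcases (hR j i).1 hji with ⟨rfl, hB⟩
        exact ⟨hB, hj⟩
      · rintro ⟨hB, h⟩
        exact ⟨i, h, (hR i i).2 ⟨rfl, hB⟩⟩
    simp only [asheAct, hiff]
  set L : Fin d → ℤ := fun i =>
    if i ∈ B then
      (if 0 ≤ v i then (if C i < m i + v i then m i else min (m i + v i) (C i - v i + 1))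
       else (if 0 ≤ m i + v i then m i + v i else (if 0 ≤ M i + v i then 0 else m i)))
    else max 0 (min (m i + v i) (C i)) with hLdef
  set U : Fin d → ℤ := fun i =>
    if i ∈ B then
      (if 0 ≤ v i then min (M i + v i) (C i)
       else (if 0 ≤ M i + v i then max (M i + v i) (-(v i) - 1) else M i))
    else max 0 (min (M i + v i) (C i)) with hUdef
  have hbound : ∀ x : Fin d → ℤ, m ≤ x → x ≤ M → ∀ i,
      L i ≤ asheAct C v R x i ∧ asheAct C v R x i ≤ U i := by
    intro x hx1 hx2 i
    have h1 := (hm i).1; have h2 := (hm i).2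
    have h3 := (hM i).1; have h4 := (hM i).2
    have h5 : m i ≤ x i := hx1 i; have h6 : x i ≤ M i := hx2 i
    rw [hact]
    simp only [hLdef, hUdef]
    by_cases hB : i ∈ B <;>
      simp only [hB, if_true, if_false, true_and, false_and, not_false_iff,
        min_def, max_def] <;>
      split_ifs <;> omega
  have hmemL : L ∈ lowerBounds {y | ∃ x : Fin d → ℤ, m ≤ x ∧ x ≤ M ∧ y = asheAct C v R x} := by
    rintro y ⟨x, hx1, hx2, rfl⟩ i
    exact (hbound x hx1 hx2 i).1
  have hmemU : U ∈ upperBounds {y | ∃ x : Fin d → ℤ, m ≤ x ∧ x ≤ M ∧ y = asheAct C v R x} := by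
    rintro y ⟨x, hx1, hx2, rfl⟩ i
    exact (hbound x hx1 hx2 i).2
  have hLm' : L ≤ m' := hm'.2 hmemL
  have hM'U : M' ≤ U := hM'.2 hmemU
  have hy0 : asheAct C v R m ∈ {y | ∃ x : Fin d → ℤ, m ≤ x ∧ x ≤ M ∧ y = asheAct C v R x} :=
    ⟨m, le_refl m, hmM, rfl⟩
  have hm'M' : ∀ i, m' i ≤ M' i := fun i => le_trans (hm'.1 hy0 i) (hM'.1 hy0 i)
  calc ∑ i, |M' i - m' i| = ∑ i, (M' i - m' i) :=
        Finset.sum_congr rfl (fun i _ => abs_of_nonneg (by have hh : m' i ≤ M' i := hm'M' i; omega))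
    _ ≤ ∑ i, (U i - L i) :=
        Finset.sum_le_sum (fun i _ => by have hh1 : L i ≤ m' i := hLm' i; have hh2 : M' i ≤ U i := hM'U i; omega)
    _ ≤ ∑ i, (if i ∈ B then max (M i - m i) (|v i| - 1) else (M i - m i)) := by
        apply Finset.sum_le_sum
        intro i _
        have h1 := (hm i).1; have h2 := (hm i).2
        have h3 := (hM i).1; have h4 := (hM i).2
        have h5 : m i ≤ M i := hmM i
        have habsv : |v i| = max (v i) (-(v i)) := abs_eq_max_neg
        simp only [hLdef, hUdef, habsv]
        by_cases hB : i ∈ B <;>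
          simp only [hB, if_true, if_false, min_def, max_def] <;>
          split_ifs <;> omega
    _ = ∑ i ∈ Finset.univ \ B, (M i - m i) + ∑ i ∈ B, max (M i - m i) (|v i| - 1) := by
        rw [← Finset.sum_sdiff (Finset.subset_univ B)]
        congr 1
        · exact Finset.sum_congr rfl (fun i hi => if_neg (Finset.mem_sdiff.1 hi).2)
        · exact Finset.sum_congr rfl (fun i hi => if_pos hi)
end

section
/- Let a be an ASHE with direction vector v and blocking relation R = {(i,i) : i ∈ B} where |v_i| = 1 for all i ∈ B. Then the envelope transition is nonexpansive: for all m ≤ M, writing [m',M'] = [m,M] ⊡ a, we have ‖M' − m'‖₁ ≤ ‖M − m‖₁. -/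
/-- an ASHE with diagonal blocking relation on  and |v_i| = 1 for i ∈ B
has an ℓ¹-nonexpansive envelope transition. -/
theorem stmt6 {d : ℕ} (C v : Fin d → ℤ) (B : Finset (Fin d))
    (R : Fin d → Fin d → Prop) (hR : ∀ j i, R j i ↔ (j = i ∧ i ∈ B))
    (hv : ∀ i ∈ B, |v i| = 1)
    (m M : Fin d → ℤ)
    (hm : ∀ i, 0 ≤ m i ∧ m i ≤ C i) (hM : ∀ i, 0 ≤ M i ∧ M i ≤ C i)
    (hmM : m ≤ M)
    (m' M' : Fin d → ℤ)
    (hm' : IsGLB {y | ∃ x : Fin d → ℤ, m ≤ x ∧ x ≤ M ∧ y = asheAct C v R x} m')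
    (hM' : IsLUB {y | ∃ x : Fin d → ℤ, m ≤ x ∧ x ≤ M ∧ y = asheAct C v R x} M') :
    ∑ i, |M' i - m' i| ≤ ∑ i, |M i - m i| := by
  classical
  -- the action coordinatewise
  set g : Fin d → ℤ → ℤ := fun i t =>
    if i ∈ B ∧ ¬(0 ≤ t + v i ∧ t + v i ≤ C i) then t
    else max 0 (min (t + v i) (C i)) with hg
  have hact : ∀ x i, asheAct C v R x i = g i (x i) := by
    intro x i
    simp only [asheAct, hg]
    congr 1
    simp only [eq_iff_iff]
    constructor
    · rintro ⟨j, hj, hRji⟩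
      rcases (hR j i).mp hRji with ⟨rfl, hiB⟩
      exact ⟨hiB, hj⟩
    · rintro ⟨hiB, h⟩
      exact ⟨i, h, (hR i i).mpr ⟨rfl, hiB⟩⟩
  -- key coordinatewise estimate
  have key : ∀ i, ∀ a b : ℤ, 0 ≤ a → a ≤ b → b ≤ C i →
      g i a ≤ g i b ∧ g i b - g i a ≤ b - a := by
    intro i a b ha hab hb
    by_cases hiB : i ∈ B
    · have hv1 : v i = 1 ∨ v i = -1 := by
        have := hv i hiB
        rcases abs_eq (by norm_num : (0:ℤ) ≤ 1) |>.mp this with h | h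
        · exact Or.inl h
        · exact Or.inr h
      simp only [hg, hiB, true_and]
      split_ifs with h1 h2 h2 <;> rcases hv1 with hv' | hv' <;> simp only [hv'] at h1 h2 ⊢ <;>
        constructor <;> omega
    · simp only [hg, hiB, false_and, if_false]
      constructor <;> omega
  have hmono : ∀ x, m ≤ x → x ≤ M → asheAct C v R m ≤ asheAct C v R x ∧
      asheAct C v R x ≤ asheAct C v R M := by
    intro x h1 h2
    constructor <;> intro i <;> rw [hact, hact]
    · exact (key i (m i) (x i) (hm i).1 (h1 i) (le_trans (h2 i) (hM i).2)).1
    · exact (key i (x i) (M i) (le_trans (hm i).1 (h1 i)) (h2 i) (hM i).2).1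
  -- identify m' and M'
  have hmem_m : asheAct C v R m ∈ {y | ∃ x : Fin d → ℤ, m ≤ x ∧ x ≤ M ∧ y = asheAct C v R x} :=
    ⟨m, le_refl _, hmM, rfl⟩
  have hmem_M : asheAct C v R M ∈ {y | ∃ x : Fin d → ℤ, m ≤ x ∧ x ≤ M ∧ y = asheAct C v R x} :=
    ⟨M, hmM, le_refl _, rfl⟩
  have hglb : IsGLB {y | ∃ x : Fin d → ℤ, m ≤ x ∧ x ≤ M ∧ y = asheAct C v R x}
      (asheAct C v R m) := by
    apply IsLeast.isGLB
    refine ⟨hmem_m, ?_⟩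
    rintro y ⟨x, h1, h2, rfl⟩
    exact (hmono x h1 h2).1
  have hlub : IsLUB {y | ∃ x : Fin d → ℤ, m ≤ x ∧ x ≤ M ∧ y = asheAct C v R x}
      (asheAct C v R M) := by
    apply IsGreatest.isLUB
    refine ⟨hmem_M, ?_⟩
    rintro y ⟨x, h1, h2, rfl⟩
    exact (hmono x h1 h2).2
  have hm'eq : m' = asheAct C v R m := hm'.unique hglb
  have hM'eq : M' = asheAct C v R M := hM'.unique hlub
  subst hm'eq hM'eq
  apply Finset.sum_le_sum
  intro i _
  rw [hact, hact]
  have := key i (m i) (M i) (hm i).1 (hmM i) (hM i).2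
  have hmMi := hmM i
  rw [abs_of_nonneg (by omega), abs_of_nonneg (by omega)]
  omega
end

section
/- For any ASHE a with direction vector v ≠ 0 and any m ≤ M in S, writing [m',M'] = [m,M] ⊡ a, one has ‖M' − m'‖₁ ≤ ‖M − m‖₁ + ‖v‖₁ − 1 whenever there exists a component i and states x,y in [m,M] with x_i+v_i ∈ [0,C_i] and y_i+v_i ∉ [0,C_i]; in all cases ‖M' − m'‖₁ ≤ ‖M − m‖₁ + ‖v‖₁. -/
/-- for any ASHE with direction v ≠ 0, the envelope-transition width increases
by at most ‖v‖₁, and by at most ‖v‖₁ - 1 if some component is critical for some state of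
[m,M] but not for another. -/
theorem stmt7 {d : ℕ} (C v : Fin d → ℤ) (R : Fin d → Fin d → Prop) (hv : v ≠ 0)
    (m M : Fin d → ℤ)
    (hm : ∀ i, 0 ≤ m i ∧ m i ≤ C i) (hM : ∀ i, 0 ≤ M i ∧ M i ≤ C i)
    (hmM : m ≤ M)
    (m' M' : Fin d → ℤ)
    (hm' : IsGLB {y | ∃ x : Fin d → ℤ, m ≤ x ∧ x ≤ M ∧ y = asheAct C v R x} m')
    (hM' : IsLUB {y | ∃ x : Fin d → ℤ, m ≤ x ∧ x ≤ M ∧ y = asheAct C v R x} M') :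
    (∑ i, |M' i - m' i| ≤ ∑ i, |M i - m i| + ∑ i, |v i|) ∧
    ((∃ i : Fin d, ∃ x y : Fin d → ℤ, m ≤ x ∧ x ≤ M ∧ m ≤ y ∧ y ≤ M ∧
        (0 ≤ x i + v i ∧ x i + v i ≤ C i) ∧ ¬(0 ≤ y i + v i ∧ y i + v i ≤ C i)) →
      ∑ i, |M' i - m' i| ≤ ∑ i, |M i - m i| + ∑ i, |v i| - 1) := by
  classical
  set lo : Fin d → ℤ := fun i => min (m i) (max 0 (min (m i + v i) (C i))) with hlo
  set hi : Fin d → ℤ := fun i => max (M i) (max 0 (min (M i + v i) (C i))) with hhi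
  -- per-coordinate bounds on asheAct
  have hbound : ∀ x : Fin d → ℤ, m ≤ x → x ≤ M → ∀ i,
      lo i ≤ asheAct C v R x i ∧ asheAct C v R x i ≤ hi i := by
    intro x hmx hxM i
    have h1 : m i ≤ x i := hmx i
    have h2 : x i ≤ M i := hxM i
    simp only [hlo, hhi, asheAct]
    split
    · constructor <;> omega
    · constructor <;> omega
  have hmem : asheAct C v R m ∈
      {y | ∃ x : Fin d → ℤ, m ≤ x ∧ x ≤ M ∧ y = asheAct C v R x} :=
    ⟨m, le_refl _, hmM, rfl⟩
  have hlom' : lo ≤ m' := by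
    apply hm'.2
    rintro y ⟨x, hmx, hxM, rfl⟩ i
    exact (hbound x hmx hxM i).1
  have hM'hi : M' ≤ hi := by
    apply hM'.2
    rintro y ⟨x, hmx, hxM, rfl⟩ i
    exact (hbound x hmx hxM i).2
  have hm'M' : m' ≤ M' := le_trans (hm'.1 hmem) (hM'.1 hmem)
  have hwidth : ∀ i, |M' i - m' i| ≤ hi i - lo i := by
    intro i
    have h1 : lo i ≤ m' i := hlom' i
    have h2 : M' i ≤ hi i := hM'hi i
    have h3 : m' i ≤ M' i := hm'M' i
    rw [abs_of_nonneg (by omega)]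
    omega
  have hcoord : ∀ i, hi i - lo i ≤ |M i - m i| + |v i| := by
    intro i
    have h1 := hm i
    have h2 := hM i
    have h3 : m i ≤ M i := hmM i
    rcases abs_cases (v i) with ⟨hv1, hv2⟩ | ⟨hv1, hv2⟩ <;>
      rw [abs_of_nonneg (by omega : (0:ℤ) ≤ M i - m i)] <;>
      simp only [hlo, hhi] <;> omega
  constructor
  · calc ∑ i, |M' i - m' i| ≤ ∑ i, (|M i - m i| + |v i|) := by
          apply Finset.sum_le_sum
          intro i _
          exact le_trans (hwidth i) (hcoord i)
    _ = ∑ i, |M i - m i| + ∑ i, |v i| := Finset.sum_add_distrib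
  · rintro ⟨i, x, y, hmx, hxM, hmy, hyM, hx, hy⟩
    have hcoordi : hi i - lo i ≤ |M i - m i| + |v i| - 1 := by
      have h1 := hm i
      have h2 := hM i
      have h3 : m i ≤ M i := hmM i
      have h4 : m i ≤ x i := hmx i
      have h5 : x i ≤ M i := hxM i
      have h6 : m i ≤ y i := hmy i
      have h7 : y i ≤ M i := hyM i
      push_neg at hy
      rcases abs_cases (v i) with ⟨hv1, hv2⟩ | ⟨hv1, hv2⟩ <;>
        rw [abs_of_nonneg (by omega : (0:ℤ) ≤ M i - m i)] <;>
        simp only [hlo, hhi] <;> omega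
    calc ∑ j, |M' j - m' j|
        ≤ ∑ j, ((|M j - m j| + |v j|) - if j = i then 1 else 0) := by
          apply Finset.sum_le_sum
          intro j _
          by_cases h : j = i
          · subst h; simpa using le_trans (hwidth j) hcoordi
          · simpa [h] using le_trans (hwidth j) (hcoord j)
      _ = ∑ j, |M j - m j| + ∑ j, |v j| - 1 := by
          rw [Finset.sum_sub_distrib, Finset.sum_add_distrib]
          simp
end

section
/- Let U be a nonempty subset of S and a an ASHE that is non-blocking on U, i.e., B(x) = ∅ for all x ∈ U. Then the envelope of the image {x·a : x ∈ U} equals the envelope transition applied to the envelope of U: ⟦U·a⟧ = ⟦U⟧ ⊡ a. -/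
/-- if an ASHE is non-blocking on a nonempty set U ⊆ S, then the envelope of
the image of U equals the envelope transition applied to the envelope of U. -/
theorem stmt10 {d : ℕ} (C v : Fin d → ℤ) (R : Fin d → Fin d → Prop)
    (U : Set (Fin d → ℤ)) (hU : U.Nonempty)
    (hUS : ∀ x ∈ U, ∀ i, 0 ≤ x i ∧ x i ≤ C i)
    (hnb : ∀ x ∈ U, ∀ i : Fin d, ¬ ∃ j, ¬(0 ≤ x j + v j ∧ x j + v j ≤ C j) ∧ R j i)
    (m M : Fin d → ℤ) (hm : IsGLB U m) (hM : IsLUB U M)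
    (q Q : Fin d → ℤ)
    (hq : IsGLB (asheAct C v R '' U) q) (hQ : IsLUB (asheAct C v R '' U) Q) :
    IsGLB {y | ∃ x : Fin d → ℤ, m ≤ x ∧ x ≤ M ∧ y = asheAct C v R x} q ∧
    IsLUB {y | ∃ x : Fin d → ℤ, m ≤ x ∧ x ≤ M ∧ y = asheAct C v R x} Q := by
  -- each component of m and M is attained by a point of U
  have hmem_m : ∀ i, ∃ x ∈ U, x i = m i := by
    intro i
    have h : IsGLB (Function.eval i '' U) (m i) := (isGLB_pi.mp hm) i
    by_contra hc
    push_neg at hc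
    have hlb : m i + 1 ∈ lowerBounds (Function.eval i '' U) := by
      rintro _ ⟨x, hx, rfl⟩
      have h1 : m i ≤ x i := h.1 ⟨x, hx, rfl⟩
      have h2 : x i ≠ m i := hc x hx
      simp only [Function.eval]
      omega
    have := h.2 hlb
    omega
  have hmem_M : ∀ i, ∃ x ∈ U, x i = M i := by
    intro i
    have h : IsLUB (Function.eval i '' U) (M i) := (isLUB_pi.mp hM) i
    by_contra hc
    push_neg at hc
    have hub : M i - 1 ∈ upperBounds (Function.eval i '' U) := by
      rintro _ ⟨x, hx, rfl⟩
      have h1 : x i ≤ M i := h.1 ⟨x, hx, rfl⟩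
      have h2 : x i ≠ M i := hc x hx
      simp only [Function.eval]
      omega
    have := h.2 hub
    omega
  -- no blocking on the whole box [m, M]
  have hnb_box : ∀ x : Fin d → ℤ, m ≤ x → x ≤ M → ∀ i : Fin d,
      ¬ ∃ j, ¬(0 ≤ x j + v j ∧ x j + v j ≤ C j) ∧ R j i := by
    rintro x hmx hxM i ⟨j, hviol, hR⟩
    obtain ⟨xm, hxmU, hxmj⟩ := hmem_m j
    obtain ⟨xM, hxMU, hxMj⟩ := hmem_M j
    have a1 : 0 ≤ xm j + v j ∧ xm j + v j ≤ C j := by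
      by_contra hc; exact hnb xm hxmU i ⟨j, hc, hR⟩
    have a2 : 0 ≤ xM j + v j ∧ xM j + v j ≤ C j := by
      by_contra hc; exact hnb xM hxMU i ⟨j, hc, hR⟩
    have b1 : m j ≤ x j := hmx j
    have b2 : x j ≤ M j := hxM j
    rw [hxmj] at a1
    rw [hxMj] at a2
    exact hviol ⟨by omega, by omega⟩
  -- formula for the action at a non-blocking point
  have act_eq : ∀ x : Fin d → ℤ, (∀ i : Fin d,
      ¬ ∃ j, ¬(0 ≤ x j + v j ∧ x j + v j ≤ C j) ∧ R j i) →
      ∀ i, asheAct C v R x i = max 0 (min (x i + v i) (C i)) := by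
    intro x hx i
    simp only [asheAct]
    rw [if_neg (hx i)]
  have hsubU : ∀ x ∈ U, m ≤ x ∧ x ≤ M := fun x hx => ⟨hm.1 hx, hM.1 hx⟩
  -- monotonicity of the clamp
  have clamp_mono : ∀ a b c : ℤ, a ≤ b → max 0 (min a c) ≤ max 0 (min b c) :=
    fun a b c h => max_le_max le_rfl (min_le_min h le_rfl)
  constructor
  · constructor
    · rintro y ⟨x, hmx, hxM, rfl⟩
      intro i
      obtain ⟨xm, hxmU, hxmi⟩ := hmem_m i
      have h1 : q ≤ asheAct C v R xm := hq.1 ⟨xm, hxmU, rfl⟩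
      have h2 : asheAct C v R xm i = max 0 (min (xm i + v i) (C i)) :=
        act_eq xm (hnb xm hxmU) i
      have h3 : asheAct C v R x i = max 0 (min (x i + v i) (C i)) :=
        act_eq x (hnb_box x hmx hxM) i
      have h4 : xm i + v i ≤ x i + v i := by
        have hh : m i ≤ x i := hmx i; omega
      calc q i ≤ asheAct C v R xm i := h1 i
        _ = max 0 (min (xm i + v i) (C i)) := h2
        _ ≤ max 0 (min (x i + v i) (C i)) := clamp_mono _ _ _ h4
        _ = asheAct C v R x i := h3.symm
    · intro b hb
      apply hq.2
      rintro _ ⟨x, hx, rfl⟩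
      exact hb ⟨x, (hsubU x hx).1, (hsubU x hx).2, rfl⟩
  · constructor
    · rintro y ⟨x, hmx, hxM, rfl⟩
      intro i
      obtain ⟨xM, hxMU, hxMi⟩ := hmem_M i
      have h1 : asheAct C v R xM ≤ Q := hQ.1 ⟨xM, hxMU, rfl⟩
      have h2 : asheAct C v R xM i = max 0 (min (xM i + v i) (C i)) :=
        act_eq xM (hnb xM hxMU) i
      have h3 : asheAct C v R x i = max 0 (min (x i + v i) (C i)) :=
        act_eq x (hnb_box x hmx hxM) i
      have h4 : x i + v i ≤ xM i + v i := by
        have hh : x i ≤ M i := hxM i; omega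
      calc asheAct C v R x i = max 0 (min (x i + v i) (C i)) := h3
        _ ≤ max 0 (min (xM i + v i) (C i)) := clamp_mono _ _ _ h4
        _ = asheAct C v R xM i := h2.symm
        _ ≤ Q i := h1 i
    · intro b hb
      apply hQ.2
      rintro _ ⟨x, hx, rfl⟩
      exact hb ⟨x, (hsubU x hx).1, (hsubU x hx).2, rfl⟩
end

section
/- Let a be a unidimensional ASHE (its direction vector v has exactly one nonzero component) and U ⊆ S a nonempty subset such that for each component i the projection {x_i : x ∈ U} is an integer interval. Then ⟦U·a⟧ = ⟦U⟧ ⊡ a. -/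
/-- for a unidimensional ASHE and a nonempty set U ⊆ S whose projections are
integer intervals, the envelope of the image of U equals the envelope transition applied to
the envelope of U. -/
theorem stmt11 {d : ℕ} (C v : Fin d → ℤ) (R : Fin d → Fin d → Prop)
    (huni : ∃ i₀ : Fin d, v i₀ ≠ 0 ∧ ∀ j : Fin d, j ≠ i₀ → v j = 0)
    (U : Set (Fin d → ℤ)) (hU : U.Nonempty)
    (hUS : ∀ x ∈ U, ∀ i, 0 ≤ x i ∧ x i ≤ C i)
    (hproj : ∀ i : Fin d, ∀ x ∈ U, ∀ y ∈ U, ∀ c : ℤ,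
      x i ≤ c → c ≤ y i → ∃ z ∈ U, z i = c)
    (m M : Fin d → ℤ) (hm : IsGLB U m) (hM : IsLUB U M)
    (q Q : Fin d → ℤ)
    (hq : IsGLB (asheAct C v R '' U) q) (hQ : IsLUB (asheAct C v R '' U) Q) :
    IsGLB {y | ∃ x : Fin d → ℤ, m ≤ x ∧ x ≤ M ∧ y = asheAct C v R x} q ∧
    IsLUB {y | ∃ x : Fin d → ℤ, m ≤ x ∧ x ≤ M ∧ y = asheAct C v R x} Q := by
  obtain ⟨i₀, hv₀, hv⟩ := huni
  obtain ⟨u₀, hu₀⟩ := hU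
  -- basic bounds: 0 ≤ m, M ≤ C, m ≤ M
  have h0m : ∀ i, 0 ≤ m i := fun i =>
    hm.2 (fun u hu j => (hUS u hu j).1) i
  have hMC : ∀ i, M i ≤ C i := fun i =>
    hM.2 (fun u hu j => (hUS u hu j).2) i
  have hmM : m ≤ M := le_trans (hm.1 hu₀) (hM.1 hu₀)
  -- membership in S for points in the box
  have hSbox : ∀ x : Fin d → ℤ, m ≤ x → x ≤ M → ∀ j, 0 ≤ x j ∧ x j ≤ C j := by
    intro x h1 h2 j
    exact ⟨le_trans (h0m j) (h1 j), le_trans (h2 j) (hMC j)⟩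
  -- attainment of any value in [m i, M i] by some element of U
  have hattain : ∀ i : Fin d, ∀ c : ℤ, m i ≤ c → c ≤ M i → ∃ z ∈ U, z i = c := by
    intro i c hc1 hc2
    have hx : ∃ x ∈ U, x i ≤ c := by
      by_contra h
      push_neg at h
      have hlb : Function.update m i (c + 1) ∈ lowerBounds U := by
        intro u hu j
        by_cases hj : j = i
        · subst hj
          simp only [Function.update_self]
          have := h u hu
          omega
        · simp only [Function.update_of_ne hj]
          exact hm.1 hu j
      have := hm.2 hlb i
      simp only [Function.update_self] at this
      omega
    have hy : ∃ y ∈ U, c ≤ y i := by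
      by_contra h
      push_neg at h
      have hub : Function.update M i (c - 1) ∈ upperBounds U := by
        intro u hu j
        by_cases hj : j = i
        · subst hj
          simp only [Function.update_self]
          have := h u hu
          omega
        · simp only [Function.update_of_ne hj]
          exact hM.1 hu j
      have := hM.2 hub i
      simp only [Function.update_self] at this
      omega
    obtain ⟨x, hxU, hxc⟩ := hx
    obtain ⟨y, hyU, hyc⟩ := hy
    exact hproj i x hxU y hyU c hxc hyc
  -- the blocking condition simplifies for points in S
  have hc : ∀ (z : Fin d → ℤ), (∀ j, 0 ≤ z j ∧ z j ≤ C j) → ∀ i,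
      ((∃ j, ¬(0 ≤ z j + v j ∧ z j + v j ≤ C j) ∧ R j i) ↔
        (¬(0 ≤ z i₀ + v i₀ ∧ z i₀ + v i₀ ≤ C i₀) ∧ R i₀ i)) := by
    intro z hz i
    constructor
    · rintro ⟨j, hj, hR⟩
      rcases eq_or_ne j i₀ with rfl | hne
      · exact ⟨hj, hR⟩
      · exfalso; apply hj; rw [hv j hne, add_zero]; exact hz j
    · rintro ⟨h1, h2⟩; exact ⟨i₀, h1, h2⟩
  -- at any coordinate other than i₀, the action is the identity on S
  have key1 : ∀ x : Fin d → ℤ, (∀ j, 0 ≤ x j ∧ x j ≤ C j) → ∀ i, i ≠ i₀ →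
      asheAct C v R x i = x i := by
    intro x hx i hi
    simp only [asheAct]
    split_ifs with h
    · rfl
    · rw [hv i hi, add_zero]
      have := hx i
      omega
  -- at coordinate i₀, the action depends only on the value at i₀
  have key2 : ∀ x x' : Fin d → ℤ, (∀ j, 0 ≤ x j ∧ x j ≤ C j) →
      (∀ j, 0 ≤ x' j ∧ x' j ≤ C j) → x i₀ = x' i₀ →
      asheAct C v R x i₀ = asheAct C v R x' i₀ := by
    intro x x' hx hx' he
    have hiff : (∃ j, ¬(0 ≤ x j + v j ∧ x j + v j ≤ C j) ∧ R j i₀) ↔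
        (∃ j, ¬(0 ≤ x' j + v j ∧ x' j + v j ≤ C j) ∧ R j i₀) := by
      rw [hc x hx i₀, hc x' hx' i₀, he]
    simp only [asheAct]
    split_ifs with h1 h2 h2
    · exact he
    · exact absurd (hiff.mp h1) h2
    · exact absurd (hiff.mpr h2) h1
    · rw [he]
  -- for any box point and coordinate, some U point has the same image coordinate
  have hmatch : ∀ x : Fin d → ℤ, m ≤ x → x ≤ M → ∀ i,
      ∃ u ∈ U, asheAct C v R u i = asheAct C v R x i := by
    intro x h1 h2 i
    rcases eq_or_ne i i₀ with rfl | hi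
    · obtain ⟨u, huU, hui⟩ := hattain i (x i) (h1 i) (h2 i)
      exact ⟨u, huU, key2 u x (hUS u huU) (hSbox x h1 h2) hui⟩
    · obtain ⟨u, huU, hui⟩ := hattain i (x i) (h1 i) (h2 i)
      refine ⟨u, huU, ?_⟩
      rw [key1 u (hUS u huU) i hi, key1 x (hSbox x h1 h2) i hi, hui]
  constructor
  · constructor
    · rintro y ⟨x, h1, h2, rfl⟩ i
      obtain ⟨u, huU, hui⟩ := hmatch x h1 h2 i
      calc q i ≤ asheAct C v R u i := hq.1 ⟨u, huU, rfl⟩ i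
        _ = asheAct C v R x i := hui
    · intro l hl
      refine hq.2 ?_
      rintro z ⟨u, huU, rfl⟩
      exact hl ⟨u, hm.1 huU, hM.1 huU, rfl⟩
  · constructor
    · rintro y ⟨x, h1, h2, rfl⟩ i
      obtain ⟨u, huU, hui⟩ := hmatch x h1 h2 i
      calc asheAct C v R x i = asheAct C v R u i := hui.symm
        _ ≤ Q i := hQ.1 ⟨u, huU, rfl⟩ i
    · intro l hl
      refine hQ.2 ?_
      rintro z ⟨u, huU, rfl⟩
      exact hl ⟨u, hm.1 huU, hM.1 huU, rfl⟩
end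

section
/- Let P = {x ∈ ℝ^d : xA ≤ b} be a polytope defined by a d×h matrix A and b ∈ ℝ^h, and let s ∈ ℝ^d with s ≥ 0. Then the Minkowski sum P ⊕ [−s/2, s/2] satisfies P ⊕ [−s/2, s/2] ⊆ {x ∈ ℝ^d : xA ≤ b + (s/2)|A|}, where |A| denotes the componentwise absolute value of A. Moreover, for a box [m,M] ⊆ ℝ^d with s = M − m, we have [m,M] ∩ P ≠ ∅ if and only if m + s/2 ∈ P ⊕ [−s/2, s/2]. -/
/-- The polytope `{x : xA ≤ b}`. -/
def poly {d h : ℕ} (A : Matrix (Fin d) (Fin h) ℝ) (b : Fin h → ℝ) : Set (Fin d → ℝ) :=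
  {x | ∀ j : Fin h, ∑ i, x i * A i j ≤ b j}

/-- The Minkowski sum of `P` with the box `[-s/2, s/2]`. -/
def minkBox {d : ℕ} (P : Set (Fin d → ℝ)) (s : Fin d → ℝ) : Set (Fin d → ℝ) :=
  {z | ∃ p ∈ P, ∃ y : Fin d → ℝ, (∀ i, -(s i / 2) ≤ y i ∧ y i ≤ s i / 2) ∧ z = p + y}

/-- the Minkowski sum `P ⊕ [-s/2,s/2]` is contained in
`{x : xA ≤ b + (s/2)|A|}`, and a box `[m,M]` (with `s = M - m`) meets `P` iff its center
`m + s/2` lies in `P ⊕ [-s/2,s/2]`. -/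
theorem stmt15 {d h : ℕ} (A : Matrix (Fin d) (Fin h) ℝ) (b : Fin h → ℝ)
    (s : Fin d → ℝ) (hs : ∀ i, 0 ≤ s i)
    (m M : Fin d → ℝ) (hsMm : s = M - m) :
    (minkBox (poly A b) s ⊆
      {x : Fin d → ℝ | ∀ j : Fin h, ∑ i, x i * A i j ≤ b j + ∑ i, (s i / 2) * |A i j|}) ∧
    ((Set.Icc m M ∩ poly A b).Nonempty ↔
      (m + fun i => s i / 2) ∈ minkBox (poly A b) s) := by
  constructor
  · rintro z ⟨p, hp, y, hy, rfl⟩ j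
    have h1 : ∑ i, (p + y) i * A i j = ∑ i, p i * A i j + ∑ i, y i * A i j := by
      rw [← Finset.sum_add_distrib]; exact Finset.sum_congr rfl fun i _ => by
        simp [add_mul]
    rw [h1]
    refine add_le_add (hp j) (Finset.sum_le_sum fun i _ => ?_)
    calc y i * A i j ≤ |y i * A i j| := le_abs_self _
      _ = |y i| * |A i j| := abs_mul _ _
      _ ≤ (s i / 2) * |A i j| := by
          apply mul_le_mul_of_nonneg_right _ (abs_nonneg _)
          exact abs_le.2 ⟨(hy i).1, (hy i).2⟩
  · constructor
    · rintro ⟨x, hx, hxP⟩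
      refine ⟨x, hxP, (fun i => m i + s i / 2 - x i), fun i => ?_, ?_⟩
      · have h1 := hx.1 i
        have h2 := hx.2 i
        have hM : M i = m i + s i := by
          have := congrFun hsMm i; simp [Pi.sub_apply] at this; linarith
        constructor <;> [linarith; linarith]
      · funext i; show m i + s i/2 = x i + (m i + s i/2 - x i); ring
    · rintro ⟨p, hp, y, hy, heq⟩
      refine ⟨p, ⟨fun i => ?_, fun i => ?_⟩, hp⟩
      all_goals
        have hM : M i = m i + s i := by
          have := congrFun hsMm i; simp [Pi.sub_apply] at this; linarith
        have h1 := (hy i).1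
        have h2 := (hy i).2
        have h3 := congrFun heq i
        simp at h3
        linarith
end

section
/- Let S be a finite lattice with bottom ⊥ and top ⊤, and for each letter a define the envelope transition [m,M] ⊡ a = ⟦{x·a : m ≤ x ≤ M}⟧. For any word w = u_1…u_n of letters, the set S·w = {x·u_1·…·u_n : x ∈ S} is contained in the interval [⊥,⊤] ⊡ u_1 ⊡ … ⊡ u_n. Consequently, if [⊥,⊤] ⊡ u_1 ⊡ … ⊡ u_n is a singleton interval [z,z], then all trajectories have coalesced: x·w = z for every x ∈ S. -/
/-- The envelope chain: iterate the envelope transition along a word, starting from [⊥,⊤]. -/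
def envFold {S : Type*} [CompleteLattice S] {A : Type*} (act : A → S → S)
    (w : List A) : S × S :=
  w.foldl (fun p a => (sInf (act a '' Set.Icc p.1 p.2), sSup (act a '' Set.Icc p.1 p.2)))
    ((⊥ : S), (⊤ : S))

/-- every trajectory x·u₁·…·uₙ lies in the interval obtained by iterating the
envelope transition from [⊥,⊤]; hence if that interval is a singleton [z,z], all trajectories
have coalesced at z. -/
theorem stmt19 {S : Type*} [CompleteLattice S] {A : Type*}
    (act : A → S → S) (w : List A) :
    (∀ x : S, w.foldl (fun s a => act a s) x ∈
      Set.Icc (envFold act w).1 (envFold act w).2) ∧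
    ((envFold act w).1 = (envFold act w).2 →
      ∀ x : S, w.foldl (fun s a => act a s) x = (envFold act w).1) := by
  have key : ∀ (w : List A) (p : S × S) (x : S), x ∈ Set.Icc p.1 p.2 →
      w.foldl (fun s a => act a s) x ∈
        Set.Icc (w.foldl (fun p a =>
          (sInf (act a '' Set.Icc p.1 p.2), sSup (act a '' Set.Icc p.1 p.2))) p).1
        (w.foldl (fun p a =>
          (sInf (act a '' Set.Icc p.1 p.2), sSup (act a '' Set.Icc p.1 p.2))) p).2 := by
    intro w
    induction w with
    | nil => intro p x hx; exact hx
    | cons a t ih =>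
      intro p x hx
      apply ih
      have hmem : act a x ∈ act a '' Set.Icc p.1 p.2 := Set.mem_image_of_mem _ hx
      exact ⟨sInf_le hmem, le_sSup hmem⟩
  have h1 : ∀ x : S, w.foldl (fun s a => act a s) x ∈
      Set.Icc (envFold act w).1 (envFold act w).2 := fun x =>
    key w (⊥, ⊤) x ⟨bot_le, le_top⟩
  refine ⟨h1, fun h x => ?_⟩
  obtain ⟨h1', h2'⟩ := h1 x
  exact le_antisymm (h ▸ h2') h1'
end
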